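/- For a ≤ b ≤ c, the function h(x,y) = e^x + e^y − 2·exp[x,y] satisfies the reverse triangle inequality h(a,c) ≥ h(a,b) + h(b,c). Moreover h(a,c) − h(a,b) − h(b,c) = 2(b−a)(c−b)·exp[a,b,b,c] ≥ 0. -/

import Mathlib

open MeasureTheory Real Filter Finset Asymptotics

/-- Divided difference of the exponential at nodes `x 0, …, x n`
(Hermite–Genocchi iterated-integral form, valid for repeated nodes). -/
noncomputable def expDD {n : ℕ} (x : Fin (n + 1) → ℝ) : ℝ :=
  ∫ t in {t : Fin n → ℝ | (∀ i, 0 ≤ t i ∧ t i ≤ 1) ∧ ∀ i j : Fin n, i ≤ j → t j ≤ t i},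
    Real.exp (x 0 + ∑ i : Fin n, t i * (x i.succ - x i.castSucc))

/-- Node tuple `a 0 ≤ … ≤ a (n-1)` followed by `x` with multiplicity `p+1`
and `y` with multiplicity `q+1`. -/
noncomputable def nodesPQ (n p q : ℕ) (a : Fin n → ℝ) (x y : ℝ) :
    Fin (n + (p + 1) + (q + 1)) → ℝ := fun i =>
  if h : (i : ℕ) < n then a ⟨i, h⟩ else if (i : ℕ) < n + (p + 1) then x else y

/-- `Kₙ(x,y) = exp[a₁,…,aₙ, x^(p+1), y^(q+1)]`. -/
noncomputable def Kn (n p q : ℕ) (a : Fin n → ℝ) (x y : ℝ) : ℝ :=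
  expDD (nodesPQ n p q a x y)

/-- Beta-weighted integral form of `exp[x^(p+1), y^(q+1)]`. -/
noncomputable def K0int (p q : ℕ) (x y : ℝ) : ℝ :=
  (1 / ((Nat.factorial p : ℝ) * (Nat.factorial q : ℝ))) *
    ∫ τ in (0:ℝ)..1, τ ^ p * (1 - τ) ^ q * Real.exp (τ * x + (1 - τ) * y)

/-- First divided difference of the exponential. -/
noncomputable def dd1 (x y : ℝ) : ℝ :=
  if x = y then Real.exp x else (Real.exp x - Real.exp y) / (x - y)

/-- `h(x,y) = eˣ + eʸ − 2·exp[x,y]`. -/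
noncomputable def hxy (x y : ℝ) : ℝ := Real.exp x + Real.exp y - 2 * dd1 x y

/-- `φ(u) = cosh u − sinh u / u`, with `φ(0)=0`. -/
noncomputable def phi (u : ℝ) : ℝ :=
  if u = 0 then 0 else Real.cosh u - Real.sinh u / u

/-- Lower incomplete gamma `γ(n,z) = ∫₀ᶻ t^(n-1) e^(−t) dt` (oriented integral). -/
noncomputable def lowerGamma (n : ℕ) (z : ℝ) : ℝ :=
  ∫ t in (0:ℝ)..z, t ^ (n - 1) * Real.exp (-t)

/-- Sum of the `k` largest coordinates of `y`. -/
noncomputable def topSum {m : ℕ} (k : ℕ) (y : Fin m → ℝ) : ℝ :=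
  sSup {t : ℝ | ∃ S : Finset (Fin m), S.card = k ∧ t = ∑ i ∈ S, y i}

/-- `e^{−t[x₀,…,x_m]}`: the divided difference of `s ↦ e^{−t s}` at the nodes `x`. -/
noncomputable def ddExpNeg (t : ℝ) {m : ℕ} (x : Fin (m + 1) → ℝ) : ℝ :=
  (-t) ^ m * expDD fun i => -t * x i

lemma measSimplex (n : ℕ) : MeasurableSet
    {t : Fin n → ℝ | (∀ i, 0 ≤ t i ∧ t i ≤ 1) ∧ ∀ i j : Fin n, i ≤ j → t j ≤ t i} := by
  apply MeasurableSet.inter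
  · show MeasurableSet {t : Fin n → ℝ | ∀ i, 0 ≤ t i ∧ t i ≤ 1}
    rw [Set.setOf_forall]
    refine MeasurableSet.iInter fun i => ?_
    exact (measurableSet_le measurable_const (measurable_pi_apply i)).inter
      (measurableSet_le (measurable_pi_apply i) measurable_const)
  · show MeasurableSet {t : Fin n → ℝ | ∀ i j : Fin n, i ≤ j → t j ≤ t i}
    rw [Set.setOf_forall]
    refine MeasurableSet.iInter fun i => ?_
    rw [Set.setOf_forall]
    refine MeasurableSet.iInter fun j => ?_
    by_cases h : i ≤ j
    · simp only [h, true_implies]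
      exact measurableSet_le (measurable_pi_apply j) (measurable_pi_apply i)
    · simp only [h, false_implies, Set.setOf_true]
      exact MeasurableSet.univ

lemma expDD_nonneg {n : ℕ} (x : Fin (n + 1) → ℝ) : 0 ≤ expDD x := by
  refine setIntegral_nonneg (measSimplex n) fun t _ => ?_
  exact (Real.exp_pos _).le

noncomputable def e3 : (Fin 3 → ℝ) ≃ᵐ ℝ × (ℝ × ℝ) :=
  (MeasurableEquiv.piFinSuccAbove (fun _ : Fin 3 => ℝ) 0).trans
    ((MeasurableEquiv.refl ℝ).prodCongr (MeasurableEquiv.finTwoArrow))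

lemma mp_e3symm : MeasurePreserving e3.symm volume volume := by
  have h1 : MeasurePreserving e3 volume volume := by
    have h2 := ((MeasurePreserving.id volume).prod
      (volume_preserving_finTwoArrow ℝ)).comp
      (volume_preserving_piFinSuccAbove (fun _ : Fin 3 => ℝ) 0)
    exact h2
  exact h1.symm e3

lemma fub2 (g : ℝ → ℝ → ℝ) (hg : Continuous fun p : ℝ × ℝ => g p.1 p.2) (u : ℝ) :
    ∫ y : ℝ × ℝ in {y | (0 ≤ y.1 ∧ y.1 ≤ u) ∧ 0 ≤ y.2 ∧ y.2 ≤ y.1}, g y.1 y.2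
      = ∫ t1 in Set.Icc 0 u, ∫ t2 in Set.Icc 0 t1, g t1 t2 := by
  set V : Set (ℝ × ℝ) := {y | (0 ≤ y.1 ∧ y.1 ≤ u) ∧ 0 ≤ y.2 ∧ y.2 ≤ y.1} with hV
  have hVm : MeasurableSet V := by
    apply MeasurableSet.inter
    · exact (measurableSet_le measurable_const measurable_fst).inter
        (measurableSet_le measurable_fst measurable_const)
    · exact (measurableSet_le measurable_const measurable_snd).inter
        (measurableSet_le measurable_snd measurable_fst)
  have hsub : V ⊆ Set.Icc ((0 : ℝ), (0 : ℝ)) (max u 0, max u 0) := by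
    rintro ⟨y1, y2⟩ ⟨⟨h1, h2⟩, h3, h4⟩
    exact ⟨⟨h1, h3⟩, le_max_of_le_left h2, le_max_of_le_left (h4.trans h2)⟩
  have hint : IntegrableOn (fun y : ℝ × ℝ => g y.1 y.2) V := by
    refine IntegrableOn.mono_set ?_ hsub
    exact hg.continuousOn.integrableOn_compact isCompact_Icc
  have hind : Integrable (V.indicator fun y : ℝ × ℝ => g y.1 y.2) := by
    rwa [integrable_indicator_iff hVm]
  rw [← integral_indicator hVm]
  rw [MeasureTheory.Measure.volume_eq_prod] at hind ⊢
  rw [integral_prod _ hind]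
  have hpt : ∀ t1 t2 : ℝ, V.indicator (fun y : ℝ × ℝ => g y.1 y.2) (t1, t2)
      = (Set.Icc (0:ℝ) u).indicator (fun s => (Set.Icc (0:ℝ) s).indicator (g s) t2) t1 := by
    intro t1 t2
    simp only [Set.indicator_apply, Set.mem_setOf_eq, Set.mem_Icc, hV]
    by_cases h1 : 0 ≤ t1 ∧ t1 ≤ u <;> by_cases h2 : 0 ≤ t2 ∧ t2 ≤ t1 <;> simp [h1, h2]
  simp_rw [hpt]
  have h2 : ∀ t1 : ℝ, (∫ t2, (Set.Icc (0:ℝ) u).indicator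
        (fun s => (Set.Icc (0:ℝ) s).indicator (g s) t2) t1)
      = (Set.Icc (0:ℝ) u).indicator (fun s => ∫ t2, (Set.Icc (0:ℝ) s).indicator (g s) t2) t1 := by
    intro t1
    by_cases h : t1 ∈ Set.Icc (0:ℝ) u <;> simp [h]
  simp_rw [h2, integral_indicator measurableSet_Icc]

lemma fub3 (g : ℝ → ℝ → ℝ → ℝ) (hg : Continuous fun p : ℝ × ℝ × ℝ => g p.1 p.2.1 p.2.2) :
    ∫ p : ℝ × ℝ × ℝ in {p | (0 ≤ p.1 ∧ p.1 ≤ 1) ∧ (0 ≤ p.2.1 ∧ p.2.1 ≤ p.1)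
        ∧ 0 ≤ p.2.2 ∧ p.2.2 ≤ p.2.1}, g p.1 p.2.1 p.2.2
      = ∫ t0 in Set.Icc (0:ℝ) 1, ∫ t1 in Set.Icc 0 t0, ∫ t2 in Set.Icc 0 t1, g t0 t1 t2 := by
  set V : Set (ℝ × ℝ × ℝ) := {p | (0 ≤ p.1 ∧ p.1 ≤ 1) ∧ (0 ≤ p.2.1 ∧ p.2.1 ≤ p.1)
        ∧ 0 ≤ p.2.2 ∧ p.2.2 ≤ p.2.1} with hVdef
  have hVm : MeasurableSet V := by
    refine MeasurableSet.inter ?_ (MeasurableSet.inter ?_ ?_)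
    · exact (measurableSet_le measurable_const measurable_fst).inter
        (measurableSet_le measurable_fst measurable_const)
    · exact (measurableSet_le measurable_const (measurable_fst.comp measurable_snd)).inter
        (measurableSet_le (measurable_fst.comp measurable_snd) measurable_fst)
    · exact (measurableSet_le measurable_const (measurable_snd.comp measurable_snd)).inter
        (measurableSet_le (measurable_snd.comp measurable_snd)
          (measurable_fst.comp measurable_snd))
  have hsub : V ⊆ Set.Icc ((0:ℝ), ((0:ℝ), (0:ℝ))) (1, (1, 1)) := by
    rintro ⟨t0, t1, t2⟩ ⟨⟨h1, h2⟩, ⟨h3, h4⟩, h5, h6⟩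
    exact ⟨⟨h1, h3, h5⟩, h2, h4.trans h2, (h6.trans h4).trans h2⟩
  have hint : IntegrableOn (fun p : ℝ × ℝ × ℝ => g p.1 p.2.1 p.2.2) V := by
    refine IntegrableOn.mono_set ?_ hsub
    exact hg.continuousOn.integrableOn_compact isCompact_Icc
  have hind : Integrable (V.indicator fun p : ℝ × ℝ × ℝ => g p.1 p.2.1 p.2.2) := by
    rwa [integrable_indicator_iff hVm]
  rw [← integral_indicator hVm]
  rw [MeasureTheory.Measure.volume_eq_prod] at hind ⊢
  rw [integral_prod _ hind]
  have hpt : ∀ (t0 : ℝ) (y : ℝ × ℝ), V.indicator (fun p : ℝ × ℝ × ℝ => g p.1 p.2.1 p.2.2) (t0, y)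
      = (Set.Icc (0:ℝ) 1).indicator (fun s =>
          ({z : ℝ × ℝ | (0 ≤ z.1 ∧ z.1 ≤ s) ∧ 0 ≤ z.2 ∧ z.2 ≤ z.1}).indicator
            (fun z => g s z.1 z.2) y) t0 := by
    intro t0 y
    simp only [Set.indicator_apply, Set.mem_setOf_eq, Set.mem_Icc, hVdef]
    by_cases h1 : 0 ≤ t0 ∧ t0 ≤ 1 <;>
      by_cases h2 : (0 ≤ y.1 ∧ y.1 ≤ t0) ∧ 0 ≤ y.2 ∧ y.2 ≤ y.1 <;> simp [h1, h2]
  simp_rw [hpt]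
  have h2 : ∀ t0 : ℝ, (∫ y : ℝ × ℝ, (Set.Icc (0:ℝ) 1).indicator (fun s =>
          ({z : ℝ × ℝ | (0 ≤ z.1 ∧ z.1 ≤ s) ∧ 0 ≤ z.2 ∧ z.2 ≤ z.1}).indicator
            (fun z => g s z.1 z.2) y) t0)
      = (Set.Icc (0:ℝ) 1).indicator (fun s => ∫ y : ℝ × ℝ,
          ({z : ℝ × ℝ | (0 ≤ z.1 ∧ z.1 ≤ s) ∧ 0 ≤ z.2 ∧ z.2 ≤ z.1}).indicator
            (fun z => g s z.1 z.2) y) t0 := by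
    intro t0
    by_cases h : t0 ∈ Set.Icc (0:ℝ) 1 <;> simp [h]
  simp_rw [h2]
  rw [integral_indicator measurableSet_Icc]
  refine setIntegral_congr_fun measurableSet_Icc fun t0 _ => ?_
  have hWm : MeasurableSet {z : ℝ × ℝ | (0 ≤ z.1 ∧ z.1 ≤ t0) ∧ 0 ≤ z.2 ∧ z.2 ≤ z.1} := by
    refine MeasurableSet.inter ?_ ?_
    · exact (measurableSet_le measurable_const measurable_fst).inter
        (measurableSet_le measurable_fst measurable_const)
    · exact (measurableSet_le measurable_const measurable_snd).inter
        (measurableSet_le measurable_snd measurable_fst)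
  rw [integral_indicator hWm]
  exact fub2 (fun s t => g t0 s t) (by fun_prop) t0

lemma expDD_abbc (a b c : ℝ) : expDD ![a,b,b,c]
    = ∫ t0 in (0:ℝ)..1, ∫ t1 in (0:ℝ)..t0, ∫ t2 in (0:ℝ)..t1,
        Real.exp ((a + (b-a)*t0) + (c-b)*t2) := by
  have step1 : expDD ![a,b,b,c] =
      ∫ t in {t : Fin 3 → ℝ | (∀ i, 0 ≤ t i ∧ t i ≤ 1) ∧ ∀ i j : Fin 3, i ≤ j → t j ≤ t i},
        Real.exp ((a + (b-a)*t 0) + (c-b)*t 2) := by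
    unfold expDD
    congr 1
    funext t
    congr 1
    simp [Fin.sum_univ_three, show (Fin.castSucc 2 : Fin 4) = 2 from rfl,
      show (Fin.castSucc 1 : Fin 4) = 1 from rfl, show (Fin.castSucc 0 : Fin 4) = 0 from rfl,
      show (Fin.succ 0 : Fin 4) = 1 from rfl, show (Fin.succ 1 : Fin 4) = 2 from rfl,
      show (Fin.succ 2 : Fin 4) = 3 from rfl]
    ring
  rw [step1]
  rw [← mp_e3symm.setIntegral_preimage_emb (MeasurableEquiv.measurableEmbedding _)
    (fun t : Fin 3 → ℝ => Real.exp ((a + (b-a)*t 0) + (c-b)*t 2)) _]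
  have hset : e3.symm ⁻¹' {t : Fin 3 → ℝ | (∀ i, 0 ≤ t i ∧ t i ≤ 1)
        ∧ ∀ i j : Fin 3, i ≤ j → t j ≤ t i}
      = {p : ℝ × ℝ × ℝ | (0 ≤ p.1 ∧ p.1 ≤ 1) ∧ (0 ≤ p.2.1 ∧ p.2.1 ≤ p.1)
        ∧ 0 ≤ p.2.2 ∧ p.2.2 ≤ p.2.1} := by
    ext p
    simp only [Set.mem_preimage, Set.mem_setOf_eq]
    constructor
    · rintro ⟨h1, h2⟩
      exact ⟨h1 0, ⟨(h1 1).1, h2 0 1 (by decide)⟩, (h1 2).1, h2 1 2 (by decide)⟩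
    · rintro ⟨⟨a1, a2⟩, ⟨b1, b2⟩, c1, c2⟩
      constructor
      · intro i
        fin_cases i
        · exact ⟨a1, a2⟩
        · exact ⟨b1, b2.trans a2⟩
        · exact ⟨c1, (c2.trans b2).trans a2⟩
      · intro i j hij
        fin_cases i <;> fin_cases j
        · exact le_refl _
        · exact b2
        · exact c2.trans b2
        · exact absurd hij (by decide)
        · exact le_refl _
        · exact c2
        · exact absurd hij (by decide)
        · exact absurd hij (by decide)
        · exact le_refl _
  rw [hset]
  have step3 := fub3 (fun t0 _ t2 => Real.exp ((a + (b-a)*t0) + (c-b)*t2)) (by fun_prop)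
  rw [show (fun p : ℝ × ℝ × ℝ => Real.exp ((a + (b-a)*(e3.symm p) 0) + (c-b)*(e3.symm p) 2))
    = fun p : ℝ × ℝ × ℝ => Real.exp ((a + (b-a)*p.1) + (c-b)*p.2.2) from rfl] at *
  rw [step3]
  have hcvt : ∀ t0 ∈ Set.Icc (0:ℝ) 1,
      (∫ t1 in Set.Icc (0:ℝ) t0, ∫ t2 in Set.Icc (0:ℝ) t1,
          Real.exp ((a + (b-a)*t0) + (c-b)*t2))
        = ∫ t1 in (0:ℝ)..t0, ∫ t2 in (0:ℝ)..t1,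
            Real.exp ((a + (b-a)*t0) + (c-b)*t2) := by
    intro t0 ht0
    rw [intervalIntegral.integral_of_le ht0.1, ← integral_Icc_eq_integral_Ioc]
    refine setIntegral_congr_fun measurableSet_Icc fun t1 ht1 => ?_
    rw [intervalIntegral.integral_of_le ht1.1, ← integral_Icc_eq_integral_Ioc]
  rw [setIntegral_congr_fun measurableSet_Icc hcvt]
  rw [integral_Icc_eq_integral_Ioc, ← intervalIntegral.integral_of_le zero_le_one]

lemma eval1 (k : ℝ) (hk : k ≠ 0) (A t : ℝ) :
    ∫ s in (0:ℝ)..t, Real.exp (A + k*s) = (Real.exp (A + k*t) - Real.exp A)/k := by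
  have h : ∀ x ∈ Set.uIcc (0:ℝ) t, HasDerivAt (fun s => Real.exp (A + k*s)/k)
      (Real.exp (A + k*x)) x := by
    intro x _
    have h1 : HasDerivAt (fun s : ℝ => A + k*s) k x := by
      simpa using ((hasDerivAt_id x).const_mul k).const_add A
    have h2 := (h1.exp).div_const k
    refine h2.congr_deriv ?_
    field_simp
  rw [intervalIntegral.integral_eq_sub_of_hasDerivAt h
    ((by continuity : Continuous fun s => Real.exp (A + k*s)).intervalIntegrable _ _)]
  simp only [mul_zero, add_zero]
  ring

lemma eval2 (k : ℝ) (hk : k ≠ 0) (A t : ℝ) :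
    ∫ s in (0:ℝ)..t, ((Real.exp (A + k*s) - Real.exp A)/k)
      = ((Real.exp (A + k*t) - Real.exp A)/k - t * Real.exp A)/k := by
  have h : ∀ x ∈ Set.uIcc (0:ℝ) t, HasDerivAt
      (fun s => (Real.exp (A + k*s)/k - s * Real.exp A)/k)
      ((Real.exp (A + k*x) - Real.exp A)/k) x := by
    intro x _
    have h1 : HasDerivAt (fun s : ℝ => A + k*s) k x := by
      simpa using ((hasDerivAt_id x).const_mul k).const_add A
    have h2 := ((h1.exp).div_const k).sub ((hasDerivAt_id x).mul_const (Real.exp A))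
    have h3 := h2.div_const k
    refine h3.congr_deriv ?_
    field_simp
  rw [intervalIntegral.integral_eq_sub_of_hasDerivAt h
    ((by continuity :
      Continuous fun s => (Real.exp (A + k*s) - Real.exp A)/k).intervalIntegrable _ _)]
  simp only [mul_zero, add_zero, zero_mul]
  ring

lemma eval3 (a p q : ℝ) (hp : p ≠ 0) (hq : q ≠ 0) (hpq : p + q ≠ 0) :
    ∫ t in (0:ℝ)..1,
        ((Real.exp ((a + p*t) + q*t) - Real.exp (a + p*t))/q - t * Real.exp (a + p*t))/q
      = Real.exp (a+p+q)/((p+q)*q^2) - Real.exp (a+p)/(p*q^2) - ((p-1)/p^2) * Real.exp (a+p)/q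
        - (Real.exp a/((p+q)*q^2) - Real.exp a/(p*q^2) + (1/p^2) * Real.exp a/q) := by
  have h : ∀ x ∈ Set.uIcc (0:ℝ) 1, HasDerivAt
      (fun t => Real.exp (a + (p+q)*t)/((p+q)*q^2) - Real.exp (a + p*t)/(p*q^2)
        - ((p*t - 1)/p^2) * Real.exp (a + p*t)/q)
      (((Real.exp ((a + p*x) + q*x) - Real.exp (a + p*x))/q - x * Real.exp (a + p*x))/q) x := by
    intro x _
    have l1 : HasDerivAt (fun t : ℝ => a + (p+q)*t) (p+q) x := by
      simpa using ((hasDerivAt_id x).const_mul (p+q)).const_add a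
    have l2 : HasDerivAt (fun t : ℝ => a + p*t) p x := by
      simpa using ((hasDerivAt_id x).const_mul p).const_add a
    have u : HasDerivAt (fun t : ℝ => (p*t - 1)/p^2) (p/p^2) x := by
      simpa using (((hasDerivAt_id x).const_mul p).sub_const 1).div_const (p^2)
    have d1 := (l1.exp).div_const ((p+q)*q^2)
    have d2 := (l2.exp).div_const (p*q^2)
    have d3 := (u.mul l2.exp).div_const q
    have hD := (d1.sub d2).sub d3
    refine hD.congr_deriv ?_
    rw [show (a + p*x) + q*x = a + (p+q)*x by ring]
    field_simp
    ring
  rw [intervalIntegral.integral_eq_sub_of_hasDerivAt h ((by continuity :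
    Continuous fun t =>
      ((Real.exp ((a + p*t) + q*t) - Real.exp (a + p*t))/q - t * Real.exp (a + p*t))/q
      ).intervalIntegrable _ _)]
  rw [show a + (p+q)*1 = a+p+q by ring, show a + p*1 = a+p by ring,
    show a + (p+q)*0 = a by ring, show a + p*0 = a by ring]
  ring

set_option maxHeartbeats 2000000 in
theorem stmt8 (a b c : ℝ) (hab : a ≤ b) (hbc : b ≤ c) :
    hxy a b + hxy b c ≤ hxy a c ∧
    hxy a c - hxy a b - hxy b c = 2 * (b - a) * (c - b) * expDD ![a, b, b, c] ∧
    0 ≤ 2 * (b - a) * (c - b) * expDD ![a, b, b, c] := by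
  have h3 : 0 ≤ 2 * (b - a) * (c - b) * expDD ![a, b, b, c] :=
    mul_nonneg (mul_nonneg (mul_nonneg (by norm_num) (sub_nonneg.mpr hab))
      (sub_nonneg.mpr hbc)) (expDD_nonneg _)
  have h2 : hxy a c - hxy a b - hxy b c = 2 * (b - a) * (c - b) * expDD ![a, b, b, c] := by
    rcases eq_or_lt_of_le hab with rfl | hab'
    · have hz : hxy a a = 0 := by simp [hxy, dd1]; ring
      rw [hz]
      ring
    rcases eq_or_lt_of_le hbc with rfl | hbc'
    · have hz : hxy b b = 0 := by simp [hxy, dd1]; ring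
      rw [hz]
      ring
    have hac : a < c := hab'.trans hbc'
    have hp : (b - a) ≠ 0 := sub_ne_zero.mpr hab'.ne'
    have hq : (c - b) ≠ 0 := sub_ne_zero.mpr hbc'.ne'
    have hpq : (b - a) + (c - b) ≠ 0 := by
      intro h; apply sub_ne_zero.mpr hac.ne'; linarith
    rw [expDD_abbc]
    simp_rw [eval1 (c-b) hq]
    simp_rw [eval2 (c-b) hq]
    rw [eval3 a (b-a) (c-b) hp hq hpq]
    rw [show a + (b-a) + (c-b) = c by ring, show a + (b-a) = b by ring]
    unfold hxy dd1
    rw [if_neg hac.ne, if_neg hab'.ne, if_neg hbc'.ne]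
    have e1 : (Real.exp a - Real.exp c)/(a - c) = (Real.exp c - Real.exp a)/((b-a)+(c-b)) := by
      rw [show (b-a)+(c-b) = -(a-c) from by ring,
        show Real.exp c - Real.exp a = -(Real.exp a - Real.exp c) from by ring, neg_div_neg_eq]
    have e2 : (Real.exp a - Real.exp b)/(a - b) = (Real.exp b - Real.exp a)/(b-a) := by
      rw [show b-a = -(a-b) from by ring,
        show Real.exp b - Real.exp a = -(Real.exp a - Real.exp b) from by ring, neg_div_neg_eq]
    have e3 : (Real.exp b - Real.exp c)/(b - c) = (Real.exp c - Real.exp b)/(c-b) := by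
      rw [show c-b = -(b-c) from by ring,
        show Real.exp c - Real.exp b = -(Real.exp b - Real.exp c) from by ring, neg_div_neg_eq]
    rw [e1, e2, e3]
    generalize Real.exp a = A
    generalize Real.exp b = B
    generalize Real.exp c = C
    generalize hP : b - a = p at hp hpq ⊢
    generalize hQ : c - b = q at hq hpq ⊢
    field_simp
    ring
  exact ⟨by linarith, h2, h3⟩
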